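/- Let n ≥ 1, J ≥ 1, γ_1, …, γ_J > 0, and let p^1, …, p^J ∈ ℝ^n be probability vectors with p^j_y > 0 for all j, y. Set Γ = (Σ_j 1/γ_j)^{−1}, A = ( Σ_y Π_i (p^i_y)^{Γ/γ_i} )^{−1}, P_y = A · Π_i (p^i_y)^{Γ/γ_i}, and let π_{γ_j, p^j} denote the entropic valuations. Then for every K ∈ ℝ^n: sup { Σ_{j=1}^J π_{γ_j,p^j}(K^j) : Σ_j K^j = K } = (1/Γ) log A + π_{Γ,P}(K), and this supremum is attained at the allocation K^j given by K^j_y = (Γ/γ_j) K_y + (1/γ_j) log(p^j_y / P_y) + (1/γ_j) log A, which satisfies Σ_{j=1}^J K^j = K. -/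

import Mathlib

open scoped BigOperators

/-- optimal risk transfer among entropic subsidiaries.  The risk-sharing value
`sup { Σ_j π_{γ_j,p^j}(K^j) : Σ_j K^j = K }` equals `(1/Γ) log A + π_{Γ,P}(K)`, and the supremum
is attained at the explicit allocation
`K^j_y = (Γ/γ_j) K_y + (1/γ_j) log(p^j_y/P_y) + (1/γ_j) log A`, which sums to `K`. -/
theorem stmt_18 (n J : ℕ) (hn : 1 ≤ n) (hJ : 1 ≤ J)
    (γ : Fin J → ℝ) (hγ : ∀ j, 0 < γ j)
    (p : Fin J → (Fin n → ℝ)) (hp : ∀ j y, 0 < p j y) (hpsum : ∀ j, ∑ y, p j y = 1)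
    (Γ : ℝ) (hΓ : Γ = (∑ j, 1 / γ j)⁻¹)
    (A : ℝ) (hA : A = (∑ y, ∏ i, (p i y) ^ (Γ / γ i))⁻¹)
    (P : Fin n → ℝ) (hP : ∀ y, P y = A * ∏ i, (p i y) ^ (Γ / γ i))
    (K : Fin n → ℝ)
    (Kopt : Fin J → (Fin n → ℝ))
    (hKopt : ∀ j y, Kopt j y
      = (Γ / γ j) * K y + (1 / γ j) * Real.log (p j y / P y) + (1 / γ j) * Real.log A) :
    (∑ j, Kopt j = K) ∧
      (∑ j, -(1 / γ j) * Real.log (∑ y, p j y * Real.exp (-(γ j) * Kopt j y))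
        = (1 / Γ) * Real.log A
          + -(1 / Γ) * Real.log (∑ y, P y * Real.exp (-Γ * K y))) ∧
      (∀ Ks : Fin J → (Fin n → ℝ), (∑ j, Ks j = K) →
        ∑ j, -(1 / γ j) * Real.log (∑ y, p j y * Real.exp (-(γ j) * Ks j y))
          ≤ (1 / Γ) * Real.log A
            + -(1 / Γ) * Real.log (∑ y, P y * Real.exp (-Γ * K y))) := by
  have hJne : Nonempty (Fin J) := Fin.pos_iff_nonempty.mp (by omega)
  have hnne : Nonempty (Fin n) := Fin.pos_iff_nonempty.mp (by omega)
  have hsumγ : 0 < ∑ j, 1 / γ j :=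
    Finset.sum_pos (fun j _ => one_div_pos.mpr (hγ j)) Finset.univ_nonempty
  have hΓpos : 0 < Γ := by rw [hΓ]; exact inv_pos.mpr hsumγ
  have hsum_inv : ∑ j, 1 / γ j = 1 / Γ := by rw [hΓ]; rw [one_div, inv_inv]
  have hw1 : ∑ j, Γ / γ j = 1 := by
    have : ∑ j, Γ / γ j = Γ * ∑ j, 1 / γ j := by
      rw [Finset.mul_sum]; exact Finset.sum_congr rfl fun j _ => by field_simp
    rw [this, hsum_inv]; field_simp
  have hApos : 0 < A := by
    rw [hA]
    have : 0 < ∑ y, ∏ i, (p i y) ^ (Γ / γ i) :=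
      Finset.sum_pos (fun y _ => Finset.prod_pos fun i _ => Real.rpow_pos_of_pos (hp i y) _)
        Finset.univ_nonempty
    positivity
  have hPpos : ∀ y, 0 < P y := fun y => by
    rw [hP]
    exact mul_pos hApos (Finset.prod_pos fun i _ => Real.rpow_pos_of_pos (hp i y) _)
  have hkey : ∀ y, ∑ j, (Γ / γ j) * Real.log (p j y) = Real.log (P y) - Real.log A := by
    intro y
    have h1 : Real.log (∏ i, (p i y) ^ (Γ / γ i)) = ∑ i, (Γ / γ i) * Real.log (p i y) := by
      rw [Real.log_prod (fun i _ => (Real.rpow_pos_of_pos (hp i y) _).ne')]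
      exact Finset.sum_congr rfl fun i _ => Real.log_rpow (hp i y) _
    have h2 : ∏ i, (p i y) ^ (Γ / γ i) = P y / A := by rw [hP y]; field_simp
    rw [← h1, h2, Real.log_div (hPpos y).ne' hApos.ne']
  have part1 : ∑ j, Kopt j = K := by
    funext y
    rw [Finset.sum_apply]
    have expand : ∀ j, Kopt j y = (Γ / γ j) * K y + (1 / Γ) * ((Γ / γ j) * Real.log (p j y))
        - (1 / γ j) * Real.log (P y) + (1 / γ j) * Real.log A := by
      intro j
      rw [hKopt, Real.log_div (hp j y).ne' (hPpos y).ne']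
      have h1 : (1 / Γ) * ((Γ / γ j) * Real.log (p j y)) = (1 / γ j) * Real.log (p j y) := by
        field_simp
      rw [h1]; ring
    calc ∑ j, Kopt j y
        = (∑ j, Γ / γ j) * K y + (1 / Γ) * (∑ j, (Γ / γ j) * Real.log (p j y))
            - (∑ j, 1 / γ j) * Real.log (P y) + (∑ j, 1 / γ j) * Real.log A := by
          rw [Finset.sum_mul, Finset.mul_sum, Finset.sum_mul, Finset.sum_mul,
            ← Finset.sum_add_distrib, ← Finset.sum_sub_distrib, ← Finset.sum_add_distrib]
          exact Finset.sum_congr rfl fun j _ => expand j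
      _ = K y := by rw [hw1, hsum_inv, hkey y]; ring
  set S : ℝ := ∑ y, P y * Real.exp (-Γ * K y) with hS
  have hSpos : 0 < S :=
    Finset.sum_pos (fun y _ => mul_pos (hPpos y) (Real.exp_pos _)) Finset.univ_nonempty
  have part2 : ∑ j, -(1 / γ j) * Real.log (∑ y, p j y * Real.exp (-(γ j) * Kopt j y))
      = (1 / Γ) * Real.log A + -(1 / Γ) * Real.log S := by
    have hTopt : ∀ j, (∑ y, p j y * Real.exp (-(γ j) * Kopt j y)) = S / A := by
      intro j
      have : ∀ y, p j y * Real.exp (-(γ j) * Kopt j y) = P y * Real.exp (-Γ * K y) / A := by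
        intro y
        have harg : -(γ j) * Kopt j y = -Γ * K y - Real.log (p j y / P y) - Real.log A := by
          rw [hKopt]
          have hne : γ j ≠ 0 := (hγ j).ne'
          field_simp
          ring
        rw [harg, Real.exp_sub, Real.exp_sub,
          Real.exp_log (div_pos (hp j y) (hPpos y)), Real.exp_log hApos]
        have hne1 : p j y ≠ 0 := (hp j y).ne'
        have hne2 : A ≠ 0 := hApos.ne'
        field_simp
      rw [Finset.sum_congr rfl fun y _ => this y, ← Finset.sum_div]
    calc ∑ j, -(1 / γ j) * Real.log (∑ y, p j y * Real.exp (-(γ j) * Kopt j y))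
        = ∑ j, -(1 / γ j) * (Real.log S - Real.log A) := by
          refine Finset.sum_congr rfl fun j _ => ?_
          rw [hTopt j, Real.log_div hSpos.ne' hApos.ne']
      _ = (∑ j, -(1 / γ j)) * (Real.log S - Real.log A) := by rw [Finset.sum_mul]
      _ = -(1 / Γ) * (Real.log S - Real.log A) := by rw [Finset.sum_neg_distrib, hsum_inv]
      _ = (1 / Γ) * Real.log A + -(1 / Γ) * Real.log S := by ring
  have part3 : ∀ Ks : Fin J → (Fin n → ℝ), (∑ j, Ks j = K) →
      ∑ j, -(1 / γ j) * Real.log (∑ y, p j y * Real.exp (-(γ j) * Ks j y))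
        ≤ (1 / Γ) * Real.log A + -(1 / Γ) * Real.log S := by
    intro Ks hKs
    set a : Fin J → Fin n → ℝ := fun j y => p j y * Real.exp (-(γ j) * Ks j y) with ha
    have hapos : ∀ j y, 0 < a j y := fun j y => mul_pos (hp j y) (Real.exp_pos _)
    set T : Fin J → ℝ := fun j => ∑ y, a j y with hT
    have hTpos : ∀ j, 0 < T j := fun j =>
      Finset.sum_pos (fun y _ => hapos j y) Finset.univ_nonempty
    -- S / A  =  ∑_y ∏_j a_{jy}^{Γ/γ_j}
    have hSA : ∑ y, ∏ j, (a j y) ^ (Γ / γ j) = S / A := by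
      have step : ∀ y, ∏ j, (a j y) ^ (Γ / γ j)
          = (∏ j, (p j y) ^ (Γ / γ j)) * Real.exp (-Γ * K y) := by
        intro y
        have h1 : ∀ j, (a j y) ^ (Γ / γ j)
            = (p j y) ^ (Γ / γ j) * Real.exp (-Γ * Ks j y) := by
          intro j
          rw [ha]
          rw [Real.mul_rpow (hp j y).le (Real.exp_pos _).le]
          congr 1
          rw [← Real.exp_log (Real.exp_pos (-(γ j) * Ks j y)), Real.log_exp,
            ← Real.exp_mul]
          congr 1
          have : γ j ≠ 0 := (hγ j).ne'
          field_simp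
        rw [Finset.prod_congr rfl fun j _ => h1 j, Finset.prod_mul_distrib]
        congr 1
        rw [← Real.exp_sum]
        congr 1
        have hKy : ∑ j, Ks j y = K y := by
          have := congrFun hKs y
          rwa [Finset.sum_apply] at this
        rw [← Finset.mul_sum, hKy]
      rw [Finset.sum_congr rfl fun y _ => step y]
      rw [eq_div_iff hApos.ne', Finset.sum_mul, hS]
      refine Finset.sum_congr rfl fun y _ => ?_
      rw [hP y]; ring
    -- generalized Hölder via AM-GM
    have hholder : ∑ y, ∏ j, (a j y) ^ (Γ / γ j) ≤ ∏ j, (T j) ^ (Γ / γ j) := by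
      have hBpos : 0 < ∏ j, (T j) ^ (Γ / γ j) :=
        Finset.prod_pos fun j _ => Real.rpow_pos_of_pos (hTpos j) _
      calc ∑ y, ∏ j, (a j y) ^ (Γ / γ j)
          = ∑ y, (∏ j, (T j) ^ (Γ / γ j)) * ∏ j, (a j y / T j) ^ (Γ / γ j) := by
            refine Finset.sum_congr rfl fun y _ => ?_
            rw [← Finset.prod_mul_distrib]
            refine Finset.prod_congr rfl fun j _ => ?_
            rw [← Real.mul_rpow (hTpos j).le (div_pos (hapos j y) (hTpos j)).le]
            congr 1
            have hTne : T j ≠ 0 := (hTpos j).ne'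
            field_simp
        _ ≤ ∑ y, (∏ j, (T j) ^ (Γ / γ j)) * ∑ j, (Γ / γ j) * (a j y / T j) := by
            refine Finset.sum_le_sum fun y _ => mul_le_mul_of_nonneg_left ?_ hBpos.le
            exact Real.geom_mean_le_arith_mean_weighted Finset.univ _ _
              (fun j _ => (div_pos hΓpos (hγ j)).le) hw1
              (fun j _ => (div_pos (hapos j y) (hTpos j)).le)
        _ = (∏ j, (T j) ^ (Γ / γ j)) * ∑ y, ∑ j, (Γ / γ j) * (a j y / T j) := by
            rw [← Finset.mul_sum]
        _ = ∏ j, (T j) ^ (Γ / γ j) := by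
            rw [Finset.sum_comm]
            have : ∀ j : Fin J, ∑ y, (Γ / γ j) * (a j y / T j) = Γ / γ j := by
              intro j
              rw [← Finset.mul_sum, ← Finset.sum_div, div_self (hTpos j).ne', mul_one]
            rw [Finset.sum_congr rfl fun j _ => this j, hw1, mul_one]
    have hlog : Real.log S - Real.log A ≤ ∑ j, (Γ / γ j) * Real.log (T j) := by
      have h1 : Real.log (∑ y, ∏ j, (a j y) ^ (Γ / γ j))
          ≤ Real.log (∏ j, (T j) ^ (Γ / γ j)) := by
        refine Real.log_le_log ?_ hholder
        rw [hSA]; exact div_pos hSpos hApos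
      rw [hSA, Real.log_div hSpos.ne' hApos.ne'] at h1
      rw [Real.log_prod (fun j _ => (Real.rpow_pos_of_pos (hTpos j) _).ne')] at h1
      calc Real.log S - Real.log A ≤ ∑ j, Real.log ((T j) ^ (Γ / γ j)) := h1
        _ = ∑ j, (Γ / γ j) * Real.log (T j) :=
            Finset.sum_congr rfl fun j _ => Real.log_rpow (hTpos j) _
    have heq : ∑ j, -(1 / γ j) * Real.log (T j)
        = -(1 / Γ) * ∑ j, (Γ / γ j) * Real.log (T j) := by
      rw [Finset.mul_sum]
      refine Finset.sum_congr rfl fun j _ => ?_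
      have h1 : γ j ≠ 0 := (hγ j).ne'
      have h2 : Γ ≠ 0 := hΓpos.ne'
      field_simp
    have h2 := mul_le_mul_of_nonneg_left hlog (le_of_lt (one_div_pos.mpr hΓpos))
    calc ∑ j, -(1 / γ j) * Real.log (∑ y, p j y * Real.exp (-(γ j) * Ks j y))
        = -(1 / Γ) * ∑ j, (Γ / γ j) * Real.log (T j) := by rw [← heq]
      _ ≤ -(1 / Γ) * (Real.log S - Real.log A) := by linarith
      _ = (1 / Γ) * Real.log A + -(1 / Γ) * Real.log S := by ring
  exact ⟨part1, part2, part3⟩
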